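/- Let m, n, k be positive integers with k ≤ n and let v, w ∈ ℂ^m ⊗ ℂ^n be unit vectors with SR(v) ≤ k and SR(w) ≤ k. Then there exist matrices A, B ∈ M_{k,n} with ‖A‖ ≤ 1 and ‖B‖ ≤ 1 such that for every X ∈ M_m ⊗ M_n, ‖(I_m ⊗ A) X (I_m ⊗ B^*)‖ ≥ |⟨v, X w⟩|. (This is the '≥' direction in the proof of Theorem 3.1: using the Schmidt decompositions of v and w, the matrices whose rows are the Schmidt vectors of v and w on the second factor work.) -/

import Mathlib

open scoped ComplexOrder Kronecker
open Matrix

noncomputable section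

/-- The standard inner product `⟨v, w⟩ = ∑ conj(vᵢ) wᵢ` on `I → ℂ`. -/
def inprod {I : Type*} [Fintype I] (v w : I → ℂ) : ℂ :=
  ∑ i, (starRingEnd ℂ) (v i) * w i

/-- `v` is a unit vector. -/
def UnitVec {I : Type*} [Fintype I] (v : I → ℂ) : Prop :=
  inprod v v = 1

/-- The Schmidt rank of a vector in `ℂ^I ⊗ ℂ^J`, i.e. the rank of the associated
`I × J` coefficient matrix. -/
noncomputable def SchmidtRank {I J : Type*} [Fintype I] [Fintype J] (v : I × J → ℂ) : ℕ :=
  (Matrix.of fun i j => v (i, j)).rank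

/-- The operator norm (largest singular value) of a matrix, as
`sup { |⟨v, A w⟩| : v, w unit vectors }`. -/
noncomputable def opNorm {I J : Type*} [Fintype I] [Fintype J] (A : Matrix I J ℂ) : ℝ :=
  sSup { t : ℝ | ∃ v w, UnitVec v ∧ UnitVec w ∧ t = ‖inprod v (A.mulVec w)‖ }

/-- The `S(k)`-norm of `X ∈ M_I ⊗ M_J`. -/
noncomputable def SNorm {I J : Type*} [Fintype I] [Fintype J] (k : ℕ)
    (X : Matrix (I × J) (I × J) ℂ) : ℝ :=
  sSup { t : ℝ | ∃ v w : I × J → ℂ, UnitVec v ∧ UnitVec w ∧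
    SchmidtRank v ≤ k ∧ SchmidtRank w ≤ k ∧
    t = ‖inprod v (X.mulVec w)‖ }

/-- `X` is a `k`-block positive (Hermitian) operator: `⟨v, X v⟩ ≥ 0` for every
vector of Schmidt rank at most `k`. -/
def kBlockPos {I J : Type*} [Fintype I] [Fintype J] (k : ℕ)
    (X : Matrix (I × J) (I × J) ℂ) : Prop :=
  X.IsHermitian ∧ ∀ v : I × J → ℂ, SchmidtRank v ≤ k → 0 ≤ inprod v (X.mulVec v)

/-- `ρ` has Schmidt number at most `k` (in particular it is positive semidefinite):
it is a finite nonnegative combination of rank-one projections onto vectors of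
Schmidt rank at most `k`. -/
def SchmidtNumberLE {I J : Type*} [Fintype I] [Fintype J] (k : ℕ)
    (ρ : Matrix (I × J) (I × J) ℂ) : Prop :=
  ∃ (N : ℕ) (c : Fin N → ℝ) (v : Fin N → (I × J → ℂ)),
    (∀ i, 0 ≤ c i) ∧ (∀ i, SchmidtRank (v i) ≤ k) ∧
    ρ = ∑ i, (c i : ℂ) • Matrix.vecMulVec (v i) (star (v i))

/-- `id_I ⊗ Φ` : the map applying `Φ` to the second tensor factor. -/
noncomputable def tensorId {I : Type*} [Fintype I] {a b : ℕ}
    (Φ : Matrix (Fin a) (Fin a) ℂ →ₗ[ℂ] Matrix (Fin b) (Fin b) ℂ)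
    (X : Matrix (I × Fin a) (I × Fin a) ℂ) : Matrix (I × Fin b) (I × Fin b) ℂ :=
  Matrix.of fun p q => Φ (Matrix.of fun s t => X (p.1, s) (q.1, t)) p.2 q.2

/-- The trace norm `‖X‖_tr = Tr √(X^* X)`. -/
noncomputable def trNorm {I : Type*} [Fintype I] [DecidableEq I] (X : Matrix I I ℂ) : ℝ :=
  (((Matrix.posSemidef_conjTranspose_mul_self X).1.eigenvectorUnitary : Matrix I I ℂ) *
    Matrix.diagonal (fun i => ((Real.sqrt ((Matrix.posSemidef_conjTranspose_mul_self X).1.eigenvalues i) : ℝ) : ℂ)) *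
    (star ((Matrix.posSemidef_conjTranspose_mul_self X).1.eigenvectorUnitary : Matrix I I ℂ))).trace.re

end

section AuxProofs


noncomputable section

lemma inprod_eq_inner {I : Type*} [Fintype I] (v w : I → ℂ) :
    inprod v w = @inner ℂ (EuclideanSpace ℂ I) _ ((WithLp.equiv 2 _).symm v) ((WithLp.equiv 2 _).symm w) := by
  simp [inprod, PiLp.inner_apply, RCLike.inner_apply, mul_comm]

lemma inprod_conjTranspose_mulVec {I J : Type*} [Fintype I] [Fintype J]
    (M : Matrix I J ℂ) (x : I → ℂ) (y : J → ℂ) :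
    inprod (Mᴴ.mulVec x) y = inprod x (M.mulVec y) := by
  simp only [inprod, mulVec, dotProduct, conjTranspose_apply, map_sum, _root_.map_mul,
    starRingEnd_apply, star_star, Finset.sum_mul, Finset.mul_sum]
  rw [Finset.sum_comm]
  congr 1; ext j; congr 1; ext i
  ring
end

noncomputable section


lemma UnitVec.norm_eq {I : Type*} [Fintype I] {v : I → ℂ} (h : UnitVec v) :
    ‖(WithLp.equiv 2 (I → ℂ)).symm v‖ = 1 := by
  have h2 : (‖(WithLp.equiv 2 (I → ℂ)).symm v‖ : ℂ) ^ 2 = 1 := by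
    have := (inner_self_eq_norm_sq_to_K (𝕜 := ℂ) ((WithLp.equiv 2 (I → ℂ)).symm v)).symm
    rw [← inprod_eq_inner] at this
    exact this.trans h
  have h3 : ‖(WithLp.equiv 2 (I → ℂ)).symm v‖ ^ 2 = 1 := by
    exact_mod_cast h2
  nlinarith [norm_nonneg ((WithLp.equiv 2 (I → ℂ)).symm v)]

lemma abs_inprod_le {I : Type*} [Fintype I] (v w : I → ℂ) :
    ‖inprod v w‖ ≤ ‖(WithLp.equiv 2 (I → ℂ)).symm v‖ * ‖(WithLp.equiv 2 (I → ℂ)).symm w‖ := by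
  rw [inprod_eq_inner]
  exact norm_inner_le_norm (𝕜 := ℂ) _ _

lemma bddAbove_opNorm_set {I J : Type*} [Fintype I] [Fintype J] (A : Matrix I J ℂ) :
    BddAbove { t : ℝ | ∃ v w, UnitVec v ∧ UnitVec w ∧ t = ‖inprod v (A.mulVec w)‖ } := by
  classical
  refine ⟨‖(Matrix.toEuclideanLin A).toContinuousLinearMap‖, ?_⟩
  rintro t ⟨a, b, ha, hb, rfl⟩
  calc ‖inprod a (A.mulVec b)‖ ≤ _ * _ := abs_inprod_le _ _
    _ ≤ ‖(Matrix.toEuclideanLin A).toContinuousLinearMap‖ := by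
        rw [ha.norm_eq, one_mul]
        have : (WithLp.equiv 2 (I → ℂ)).symm (A.mulVec b)
            = (Matrix.toEuclideanLin A).toContinuousLinearMap ((WithLp.equiv 2 (J → ℂ)).symm b) := by
          simp [Matrix.toEuclideanLin_apply]
        rw [this]
        calc ‖_‖ ≤ ‖(Matrix.toEuclideanLin A).toContinuousLinearMap‖ * ‖(WithLp.equiv 2 (J → ℂ)).symm b‖ :=
              ContinuousLinearMap.le_opNorm _ _
          _ = _ := by rw [hb.norm_eq, mul_one]

lemma le_opNorm_of_units {I J : Type*} [Fintype I] [Fintype J] (A : Matrix I J ℂ)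
    {a : I → ℂ} {b : J → ℂ} (ha : UnitVec a) (hb : UnitVec b) :
    ‖inprod a (A.mulVec b)‖ ≤ opNorm A :=
  le_csSup (bddAbove_opNorm_set A) ⟨a, b, ha, hb, rfl⟩
end

noncomputable section
lemma exists_factor {m n k : ℕ} (hkn : k ≤ n) (M : Matrix (Fin m) (Fin n) ℂ)
    (h : M.rank ≤ k) :
    ∃ (P : Matrix (Fin m) (Fin k) ℂ) (C : Matrix (Fin k) (Fin n) ℂ),
      C * Cᴴ = 1 ∧ M = P * C := by
  classical
  obtain ⟨d, U, hd, hU1, hU2, hspec⟩ :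
      ∃ (d : Fin n → ℝ) (U : Matrix (Fin n) (Fin n) ℂ),
        (Finset.univ.filter fun i => d i ≠ 0).card ≤ k ∧
        Uᴴ * U = 1 ∧ U * Uᴴ = 1 ∧
        Mᴴ * M = U * Matrix.diagonal (fun i => (RCLike.ofReal (d i) : ℂ)) * Uᴴ := by
    have hG : (Mᴴ * M).IsHermitian := Matrix.isHermitian_conjTranspose_mul_self M
    refine ⟨hG.eigenvalues, hG.eigenvectorUnitary, ?_, ?_, ?_, ?_⟩
    · have h1 := hG.rank_eq_card_non_zero_eigs
      have h2 := Matrix.rank_conjTranspose_mul_self M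
      have h3 : Fintype.card {i // hG.eigenvalues i ≠ 0}
          = (Finset.univ.filter fun i => hG.eigenvalues i ≠ 0).card := by
        simp [Fintype.card_subtype]
      omega
    · simpa [Matrix.star_eq_conjTranspose] using
        Matrix.mem_unitaryGroup_iff'.mp hG.eigenvectorUnitary.2
    · simpa [Matrix.star_eq_conjTranspose] using
        Matrix.mem_unitaryGroup_iff.mp hG.eigenvectorUnitary.2
    · simpa [Matrix.star_eq_conjTranspose, Function.comp_def] using hG.spectral_theorem
  obtain ⟨T, hST, hTcard⟩ := Finset.exists_superset_card_eq hd (by simpa using hkn)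
  have hTc : Fintype.card {x // x ∈ T} = k := by simpa using hTcard
  let e : {x // x ∈ T} ≃ Fin k := Fintype.equivFinOfCardEq hTc
  let f : Fin k → Fin n := fun i => (e.symm i : Fin n)
  have hf : Function.Injective f := fun a b hab => by
    apply e.symm.injective; exact Subtype.ext hab
  have hfT : ∀ i, f i ∈ T := fun i => (e.symm i).2
  set N : Matrix (Fin m) (Fin n) ℂ := M * U with hNdef
  have hNN : Nᴴ * N = Matrix.diagonal (fun i => (RCLike.ofReal (d i) : ℂ)) := by
    rw [hNdef, Matrix.conjTranspose_mul]
    have e1 : Uᴴ * Mᴴ * (M * U) = Uᴴ * (Mᴴ * M) * U := by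
      simp only [Matrix.mul_assoc]
    rw [e1, hspec]
    have e2 : Uᴴ * (U * Matrix.diagonal (fun i => (RCLike.ofReal (d i) : ℂ)) * Uᴴ) * U
        = (Uᴴ * U) * Matrix.diagonal (fun i => (RCLike.ofReal (d i) : ℂ)) * (Uᴴ * U) := by
      simp only [Matrix.mul_assoc]
    rw [e2, hU1, one_mul, mul_one]
  have hNcol : ∀ c : Fin n, d c = 0 → ∀ j, N j c = 0 := by
    intro c hc j
    have hdiag : (Nᴴ * N) c c = 0 := by rw [hNN]; simp [hc]
    have hsum : ∑ j, Complex.normSq (N j c) = 0 := by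
      have : ((∑ j, Complex.normSq (N j c) : ℝ) : ℂ) = 0 := by
        push_cast
        rw [← hdiag, Matrix.mul_apply]
        congr 1; ext j
        rw [Matrix.conjTranspose_apply, Complex.star_def,
          ← Complex.normSq_eq_conj_mul_self]
      exact_mod_cast this
    have := (Finset.sum_eq_zero_iff_of_nonneg (fun j _ => Complex.normSq_nonneg (N j c))).mp hsum
      j (Finset.mem_univ j)
    exact Complex.normSq_eq_zero.mp this
  set J' : Matrix (Fin n) (Fin k) ℂ := Matrix.of (fun c i => if c = f i then 1 else 0) with hJdef
  have hJH : ∀ (i : Fin k) (c : Fin n), J'ᴴ i c = if c = f i then (1:ℂ) else 0 := by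
    intro i c
    rw [Matrix.conjTranspose_apply, hJdef, Matrix.of_apply]
    split_ifs <;> simp
  have hJJ : J'ᴴ * J' = 1 := by
    ext i i'
    rw [Matrix.mul_apply]
    simp only [hJH]
    simp only [hJdef, Matrix.of_apply]
    by_cases hii : i = i'
    · subst hii
      simp [Finset.sum_ite_eq']
    · rw [Finset.sum_eq_zero, Matrix.one_apply_ne hii]
      intro c _
      by_cases hc : c = f i
      · have hne : c ≠ f i' := fun hc' => hii (hf ((hc.symm.trans hc')))
        rw [if_pos hc, one_mul, if_neg hne]
      · rw [if_neg hc, zero_mul]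
  have hNJ1 : ∀ (j : Fin m) (i : Fin k), (N * J') j i = N j (f i) := by
    intro j i
    rw [Matrix.mul_apply]
    simp only [hJdef, Matrix.of_apply, mul_ite, mul_one, mul_zero]
    simp [Finset.sum_ite_eq']
  have hNJ : N * J' * J'ᴴ = N := by
    ext j c'
    rw [Matrix.mul_apply]
    simp only [hNJ1, hJH, mul_ite, mul_one, mul_zero]
    by_cases hc : c' ∈ T
    · obtain ⟨i0, hi0⟩ : ∃ i0, f i0 = c' := ⟨e ⟨c', hc⟩, by simp [f, e]⟩
      rw [Finset.sum_eq_single i0]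
      · simp [hi0]
      · intro b _ hb
        have : c' ≠ f b := fun hcb => hb (hf (by rw [hi0, hcb]))
        simp [this]
      · simp
    · have hzero : N j c' = 0 := by
        refine hNcol c' ?_ j
        by_contra hne
        exact hc (hST (by simp [hne]))
      rw [hzero]
      refine Finset.sum_eq_zero fun b _ => ?_
      have : c' ≠ f b := fun hcb => hc (hcb ▸ hfT b)
      simp [this]
  refine ⟨N * J', J'ᴴ * Uᴴ, ?_, ?_⟩
  · have e3 : (J'ᴴ * Uᴴ) * (J'ᴴ * Uᴴ)ᴴ = J'ᴴ * (Uᴴ * U) * J' := by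
      simp only [Matrix.conjTranspose_mul, Matrix.conjTranspose_conjTranspose,
        Matrix.mul_assoc]
    rw [e3, hU1, Matrix.mul_one, hJJ]
  · calc M = M * (U * Uᴴ) := by rw [hU2, Matrix.mul_one]
      _ = N * Uᴴ := by rw [hNdef, Matrix.mul_assoc]
      _ = (N * J' * J'ᴴ) * Uᴴ := by rw [hNJ]
      _ = N * J' * (J'ᴴ * Uᴴ) := by simp only [Matrix.mul_assoc]
end

noncomputable section
lemma inprod_self_eq {I : Type*} [Fintype I] (x : I → ℂ) :
    inprod x x = (‖(WithLp.equiv 2 (I → ℂ)).symm x‖ : ℂ) ^ 2 := by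
  rw [inprod_eq_inner]; exact inner_self_eq_norm_sq_to_K _

lemma opNorm_le_one {k n : ℕ} (A : Matrix (Fin k) (Fin n) ℂ) (hA : A * Aᴴ = 1) :
    opNorm A ≤ 1 := by
  unfold opNorm
  apply Real.sSup_le _ zero_le_one
  rintro t ⟨a, b, ha, hb, rfl⟩
  have key : ‖inprod a (A.mulVec b)‖
      ≤ ‖(WithLp.equiv 2 (Fin k → ℂ)).symm (A.mulVec b)‖ := by
    calc ‖inprod a (A.mulVec b)‖ ≤ _ * _ := abs_inprod_le _ _
      _ = _ := by rw [ha.norm_eq, one_mul]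
  refine key.trans ?_
  set R : Matrix (Fin n) (Fin n) ℂ := 1 - Aᴴ * A with hRdef
  have hR1 : Rᴴ = R := by
    rw [hRdef, Matrix.conjTranspose_sub, Matrix.conjTranspose_one, Matrix.conjTranspose_mul,
      Matrix.conjTranspose_conjTranspose]
  have hR2 : R * R = R := by
    have hP : (Aᴴ * A) * (Aᴴ * A) = Aᴴ * A := by
      calc (Aᴴ * A) * (Aᴴ * A) = Aᴴ * (A * Aᴴ) * A := by simp only [Matrix.mul_assoc]
        _ = Aᴴ * A := by rw [hA, Matrix.mul_one]
    rw [hRdef]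
    have expand : (1 - Aᴴ * A) * (1 - Aᴴ * A)
        = 1 - Aᴴ * A - Aᴴ * A + (Aᴴ * A) * (Aᴴ * A) := by noncomm_ring
    rw [expand, hP]
    abel
  have e1 : inprod (A.mulVec b) (A.mulVec b) = inprod b ((Aᴴ * A).mulVec b) := by
    have := inprod_conjTranspose_mulVec Aᴴ b (A.mulVec b)
    rw [Matrix.conjTranspose_conjTranspose] at this
    rw [this, Matrix.mulVec_mulVec]
  have e2 : inprod (R.mulVec b) (R.mulVec b) = inprod b (R.mulVec b) := by
    have := inprod_conjTranspose_mulVec Rᴴ b (R.mulVec b)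
    rw [Matrix.conjTranspose_conjTranspose] at this
    rw [this, hR1, Matrix.mulVec_mulVec, hR2]
  have e3 : inprod b ((Aᴴ * A).mulVec b) + inprod b (R.mulVec b) = 1 := by
    have : (Aᴴ * A).mulVec b + R.mulVec b = b := by
      rw [← Matrix.add_mulVec, hRdef]
      simp
    rw [inprod, inprod, ← Finset.sum_add_distrib]
    have : ∑ i, ((starRingEnd ℂ) (b i) * (Aᴴ * A).mulVec b i
        + (starRingEnd ℂ) (b i) * R.mulVec b i) = inprod b b := by
      rw [inprod]
      refine Finset.sum_congr rfl fun i _ => ?_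
      rw [← mul_add]
      congr 1
      exact congrFun this i
    rw [this, hb]
  have e4 : (‖(WithLp.equiv 2 (Fin k → ℂ)).symm (A.mulVec b)‖ : ℂ) ^ 2
      + (‖(WithLp.equiv 2 (Fin n → ℂ)).symm (R.mulVec b)‖ : ℂ) ^ 2 = 1 := by
    rw [← inprod_self_eq, ← inprod_self_eq, e1, e2, e3]
  have e5 : ‖(WithLp.equiv 2 (Fin k → ℂ)).symm (A.mulVec b)‖ ^ 2
      + ‖(WithLp.equiv 2 (Fin n → ℂ)).symm (R.mulVec b)‖ ^ 2 = 1 := by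
    exact_mod_cast e4
  nlinarith [norm_nonneg ((WithLp.equiv 2 (Fin k → ℂ)).symm (A.mulVec b)),
    norm_nonneg ((WithLp.equiv 2 (Fin n → ℂ)).symm (R.mulVec b)),
    sq_nonneg (‖(WithLp.equiv 2 (Fin n → ℂ)).symm (R.mulVec b)‖)]

lemma vec_eq_kron {m n k : ℕ} (P : Matrix (Fin m) (Fin k) ℂ) (C : Matrix (Fin k) (Fin n) ℂ)
    (v : Fin m × Fin n → ℂ) (hv : ∀ s t, v (s, t) = (P * C) s t) :
    v = (((1 : Matrix (Fin m) (Fin m) ℂ) ⊗ₖ Cᴴᵀ)ᴴ).mulVec (fun p => P p.1 p.2) := by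
  funext p
  obtain ⟨s, t⟩ := p
  rw [hv, Matrix.mulVec, dotProduct, Fintype.sum_prod_type]
  simp only [Matrix.conjTranspose_apply, Matrix.kroneckerMap_apply, Matrix.transpose_apply,
    star_mul', star_star, Matrix.one_apply]
  rw [Finset.sum_eq_single s]
  · rw [Matrix.mul_apply]
    refine Finset.sum_congr rfl fun i _ => ?_
    simp [mul_comm]
  · intro s' _ hs'
    have : ¬ (s' = s) := hs'
    simp [this]
  · simp

lemma unit_of_factor {m n k : ℕ} (P : Matrix (Fin m) (Fin k) ℂ) (C : Matrix (Fin k) (Fin n) ℂ)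
    (hC : C * Cᴴ = 1) (v : Fin m × Fin n → ℂ) (hv : ∀ s t, v (s, t) = (P * C) s t)
    (h : UnitVec v) : UnitVec (fun p : Fin m × Fin k => P p.1 p.2) := by
  have key : ∀ {J : Type} [Fintype J] (M : Matrix (Fin m) J ℂ) (u : Fin m × J → ℂ),
      (∀ s t, u (s, t) = M s t) → inprod u u = (M * Mᴴ).trace := by
    intro J _ M u hu
    rw [inprod, Matrix.trace, Fintype.sum_prod_type]
    refine Finset.sum_congr rfl fun s _ => ?_
    rw [Matrix.diag_apply, Matrix.mul_apply]
    refine Finset.sum_congr rfl fun t _ => ?_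
    rw [hu, Matrix.conjTranspose_apply, starRingEnd_apply, mul_comm]
  have h1 : inprod (fun p : Fin m × Fin k => P p.1 p.2) (fun p => P p.1 p.2)
      = (P * Pᴴ).trace := key P _ (fun s t => rfl)
  have h2 : inprod v v = ((P * C) * (P * C)ᴴ).trace := key (P * C) v hv
  have h3 : (P * C) * (P * C)ᴴ = P * Pᴴ := by
    rw [Matrix.conjTranspose_mul]
    calc P * C * (Cᴴ * Pᴴ) = P * (C * Cᴴ) * Pᴴ := by simp only [Matrix.mul_assoc]
      _ = P * Pᴴ := by rw [hC, Matrix.mul_one]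
  rw [UnitVec] at h ⊢
  rw [h1, ← h3, ← h2, h]
end


end AuxProofs

/-- The '≥' direction of Theorem 3.1. -/
theorem exists_contractions_of_schmidt_vectors (m n k : ℕ) (hm : 0 < m) (hn : 0 < n)
    (hk : 0 < k) (hkn : k ≤ n)
    (v w : Fin m × Fin n → ℂ) (hv : UnitVec v) (hw : UnitVec w)
    (hvk : SchmidtRank v ≤ k) (hwk : SchmidtRank w ≤ k) :
    ∃ A B : Matrix (Fin k) (Fin n) ℂ, opNorm A ≤ 1 ∧ opNorm B ≤ 1 ∧
      ∀ X : Matrix (Fin m × Fin n) (Fin m × Fin n) ℂ,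
        ‖inprod v (X.mulVec w)‖ ≤
          opNorm (((1 : Matrix (Fin m) (Fin m) ℂ) ⊗ₖ A) * X *
            (((1 : Matrix (Fin m) (Fin m) ℂ) ⊗ₖ B)ᴴ)) := by
  classical
  obtain ⟨P, C, hC, hPC⟩ := exists_factor hkn (Matrix.of fun i j => v (i, j)) hvk
  obtain ⟨Q, D, hD, hQD⟩ := exists_factor hkn (Matrix.of fun i j => w (i, j)) hwk
  have key : ∀ (C : Matrix (Fin k) (Fin n) ℂ), C * Cᴴ = 1 → Cᴴᵀ * Cᴴᵀᴴ = 1 := by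
    intro C hC
    have h1 : Cᴴᵀᴴ = Cᵀ := by
      ext i j
      simp [Matrix.conjTranspose_apply, Matrix.transpose_apply]
    rw [h1, ← Matrix.transpose_mul, hC, Matrix.transpose_one]
  have hAA := key C hC
  have hBB := key D hD
  have hvC : ∀ s t, v (s, t) = (P * C) s t := fun s t => by rw [← hPC]; rfl
  have hwD : ∀ s t, w (s, t) = (Q * D) s t := fun s t => by rw [← hQD]; rfl
  have hvrep := vec_eq_kron P C v hvC
  have hwrep := vec_eq_kron Q D w hwD
  have hv' : UnitVec (fun p : Fin m × Fin k => P p.1 p.2) := unit_of_factor P C hC v hvC hv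
  have hw' : UnitVec (fun p : Fin m × Fin k => Q p.1 p.2) := unit_of_factor Q D hD w hwD hw
  refine ⟨Cᴴᵀ, Dᴴᵀ, opNorm_le_one _ hAA, opNorm_le_one _ hBB, fun X => ?_⟩
  have heq : inprod v (X.mulVec w)
      = inprod (fun p : Fin m × Fin k => P p.1 p.2)
        (((((1 : Matrix (Fin m) (Fin m) ℂ) ⊗ₖ Cᴴᵀ) * X *
          (((1 : Matrix (Fin m) (Fin m) ℂ) ⊗ₖ Dᴴᵀ)ᴴ))).mulVec
          (fun p : Fin m × Fin k => Q p.1 p.2)) := by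
    conv_lhs => rw [hvrep, hwrep]
    rw [inprod_conjTranspose_mulVec]
    congr 1
    rw [Matrix.mulVec_mulVec, Matrix.mulVec_mulVec]
  rw [heq]
  exact le_opNorm_of_units _ hv' hw'
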